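/- arXiv:1512.02807 — 3 statements merged into one kernel-verified Lean document; each statement's English description precedes it below -/
import Mathlib

section
/- Let ξ ∈ ℝ, α ≠ 0, and 0 < c < 1/(6|α|). Define G(x) = x + α·φ((x-ξ)/c)·(x-ξ)·|x-ξ| where φ(u)=(1+u)^3(1-u)^3 for |u|≤1 and 0 otherwise. Then G'(x) > 0 for all x ∈ ℝ, and G'(x) = 1 for all x with |x-ξ| > c. Consequently G is a bijection from ℝ to ℝ. -/
noncomputable def phi : ℝ → ℝ := fun u => if |u| ≤ 1 then (1+u)^3*(1-u)^3 else 0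

noncomputable def Gtrans (ξ α c : ℝ) : ℝ → ℝ :=
  fun x => x + α * phi ((x - ξ)/c) * (x - ξ) * |x - ξ|

noncomputable def Gd (ξ α c : ℝ) : ℝ → ℝ := fun x =>
  if |x - ξ| < c then
    1 + α * (2 * |x - ξ| * (1 - ((x-ξ)/c)^2)^2 * (1 - 4*((x-ξ)/c)^2)) else 1

lemma phi_eq {u : ℝ} (h : |u| ≤ 1) : phi u = (1 - u^2)^3 := by
  simp only [phi, if_pos h]; ring

lemma phi_abs_le (u : ℝ) : |phi u| ≤ 1 := by
  rcases le_or_gt |u| 1 with h | h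
  · rw [phi_eq h]
    have h1 : u^2 ≤ 1 := by nlinarith [abs_le.1 h]
    have hA : 0 ≤ 1 - u^2 := by linarith
    have hB : 1 - u^2 ≤ 1 := by nlinarith [sq_nonneg u]
    rw [abs_le]
    constructor
    · have := pow_nonneg hA 3; linarith
    · calc (1 - u^2)^3 ≤ 1^3 := pow_le_pow_left₀ hA hB 3
        _ = 1 := one_pow 3
  · simp [phi, not_le.2 h]

lemma sq_isLittleO (a : ℝ) :
    (fun y : ℝ => (y - a)^2) =o[nhds a] fun y => y - a := by
  have h : HasDerivAt (fun y : ℝ => (y - a)^2) 0 a := by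
    simpa using ((hasDerivAt_id a).sub_const a).fun_pow 2
  have := hasDerivAt_iff_isLittleO.mp h
  simpa using this

lemma cube_isLittleO (a : ℝ) :
    (fun y : ℝ => (y - a)^3) =o[nhds a] fun y => y - a := by
  have h : HasDerivAt (fun y : ℝ => (y - a)^3) 0 a := by
    simpa using ((hasDerivAt_id a).sub_const a).fun_pow 3
  have := hasDerivAt_iff_isLittleO.mp h
  simpa using this

lemma key_bound {c : ℝ} (hc : 0 < c) {t t0 : ℝ} (h0 : |t0| = c) :
    abs (phi (t/c) * t * |t|) ≤ (8/c) * |t - t0|^3 := by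
  rcases le_or_gt |t| c with h | h
  · have habs : |t/c| ≤ 1 := by
      rw [abs_div, abs_of_pos hc]; exact (div_le_one hc).mpr h
    rw [phi_eq habs]
    have hd1 : c - |t| ≤ |t - t0| := by
      have h2 := abs_sub_abs_le_abs_sub t0 t
      rw [h0, abs_sub_comm] at h2
      linarith
    have hd0 : (0:ℝ) ≤ |t - t0| := abs_nonneg _
    have hc2 : (0:ℝ) < c^2 := by positivity
    have hA : 0 ≤ 1 - (t/c)^2 := by
      have h3 : (t/c)^2 ≤ 1 := by
        have := abs_le.1 habs
        nlinarith
      linarith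
    have hB : 1 - (t/c)^2 ≤ 2*|t - t0|/c := by
      have expand : 1 - (t/c)^2 = (c^2 - t^2)/c^2 := by field_simp
      rw [expand, div_le_div_iff₀ hc2 hc]
      nlinarith [mul_le_mul_of_nonneg_right hd1 (show (0:ℝ) ≤ (c+|t|)*c by positivity),
        mul_le_mul_of_nonneg_left (show (c+|t|)*c ≤ 2*c^2 by nlinarith) hd0,
        sq_abs t, abs_nonneg t]
    have hLHS : abs ((1 - (t/c)^2)^3 * t * |t|) = (1 - (t/c)^2)^3 * t^2 := by
      rw [abs_mul, abs_mul, abs_abs, abs_of_nonneg (pow_nonneg hA 3), mul_assoc,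
        abs_mul_abs_self]
      ring
    rw [hLHS]
    have h3 : (1 - (t/c)^2)^3 ≤ (2*|t - t0|/c)^3 := pow_le_pow_left₀ hA hB 3
    have ht2 : t^2 ≤ c^2 := by nlinarith [abs_nonneg t, sq_abs t]
    have h4 : (1 - (t/c)^2)^3 * t^2 ≤ (2*|t - t0|/c)^3 * c^2 :=
      mul_le_mul h3 ht2 (sq_nonneg t) (by positivity)
    calc (1 - (t/c)^2)^3 * t^2 ≤ (2*|t - t0|/c)^3 * c^2 := h4
      _ = (8/c) * |t - t0|^3 := by field_simp; ring
  · have hn : ¬ |t/c| ≤ 1 := by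
      rw [abs_div, abs_of_pos hc, not_le]; exact (one_lt_div hc).mpr h
    simp only [phi, if_neg hn]
    have : (0:ℝ) ≤ (8/c) * |t - t0|^3 := by positivity
    simpa using this

lemma Gtrans_hasDerivAt (ξ α c : ℝ) (hc : 0 < c) (x : ℝ) :
    HasDerivAt (Gtrans ξ α c) (Gd ξ α c x) x := by
  rcases lt_trichotomy (|x - ξ|) c with hlt | hbd | hgt
  · -- |x - ξ| < c
    rcases lt_trichotomy (x - ξ) 0 with hneg | hzero | hpos
    · -- negative side
      have h1 : HasDerivAt (fun y : ℝ => y - ξ) 1 x := (hasDerivAt_id x).sub_const ξ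
      have h2 := h1.div_const c
      have h3 := h2.fun_pow 2
      have h4 := h3.const_sub 1
      have h5 := h4.fun_pow 3
      have h6 := h1.fun_pow 2
      have h7 := (h5.fun_mul h6).const_mul α
      have h8 := (hasDerivAt_id' x).fun_sub h7
      have hev : (fun y : ℝ => y - α * ((1 - ((y - ξ)/c)^2)^3 * (y - ξ)^2))
          =ᶠ[nhds x] Gtrans ξ α c := by
        have hopen : IsOpen {y : ℝ | y - ξ < 0 ∧ |y - ξ| < c} :=
          IsOpen.inter (isOpen_lt (continuous_id.sub continuous_const) continuous_const)
            (isOpen_lt ((continuous_id.sub continuous_const).abs) continuous_const)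
        filter_upwards [hopen.mem_nhds ⟨hneg, hlt⟩] with y hy
        obtain ⟨hy1, hy2⟩ := hy
        have habs : |(y - ξ)/c| ≤ 1 := by
          rw [abs_div, abs_of_pos hc]; exact le_of_lt ((div_lt_one hc).mpr hy2)
        have hay : |y - ξ| = -(y - ξ) := abs_of_neg hy1
        simp only [Gtrans, phi_eq habs, hay]
        ring
      refine hev.hasDerivAt_iff.mp ?_
      convert h8 using 1
      have hax : |x - ξ| = -(x - ξ) := abs_of_neg hneg
      simp only [Gd]
      rw [if_pos hlt, hax]
      push_cast
      field_simp
      ring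
    · -- x = ξ
      obtain rfl : x = ξ := by linarith
      have hGd : Gd x α c x = 1 := by
        simp [Gd, hc]
      rw [hGd, hasDerivAt_iff_isLittleO]
      have hG0 : Gtrans x α c x = x := by simp [Gtrans]
      have hbig : (fun y => Gtrans x α c y - Gtrans x α c x - (y - x) • (1:ℝ))
          =O[nhds x] fun y => (y - x)^2 := by
        apply Asymptotics.IsBigO.of_bound |α|
        filter_upwards with y
        have hexpr : Gtrans x α c y - Gtrans x α c x - (y - x) • (1:ℝ)
            = α * phi ((y - x)/c) * (y - x) * |y - x| := by
          rw [hG0]; simp only [Gtrans, smul_eq_mul, mul_one]; ring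
        rw [hexpr]
        have h1 : abs (α * phi ((y - x)/c) * (y - x) * |y - x|)
            = |α| * |phi ((y - x)/c)| * ((y - x)^2) := by
          rw [abs_mul, abs_mul, abs_mul, abs_abs, mul_assoc, abs_mul_abs_self]
          ring
        simp only [Real.norm_eq_abs, h1, abs_pow, sq_abs]
        nlinarith [phi_abs_le ((y - x)/c), abs_nonneg α,
          abs_nonneg (phi ((y - x)/c)), sq_nonneg (y - x),
          mul_le_mul_of_nonneg_left (phi_abs_le ((y - x)/c)) (abs_nonneg α),
          mul_le_mul_of_nonneg_right
            (mul_le_mul_of_nonneg_left (phi_abs_le ((y - x)/c)) (abs_nonneg α))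
            (sq_nonneg (y - x))]
      exact hbig.trans_isLittleO (sq_isLittleO x)
    · -- positive side
      have h1 : HasDerivAt (fun y : ℝ => y - ξ) 1 x := (hasDerivAt_id x).sub_const ξ
      have h2 := h1.div_const c
      have h3 := h2.fun_pow 2
      have h4 := h3.const_sub 1
      have h5 := h4.fun_pow 3
      have h6 := h1.fun_pow 2
      have h7 := (h5.fun_mul h6).const_mul α
      have h8 := (hasDerivAt_id' x).fun_add h7
      have hev : (fun y : ℝ => y + α * ((1 - ((y - ξ)/c)^2)^3 * (y - ξ)^2))
          =ᶠ[nhds x] Gtrans ξ α c := by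
        have hopen : IsOpen {y : ℝ | 0 < y - ξ ∧ |y - ξ| < c} :=
          IsOpen.inter (isOpen_lt continuous_const (continuous_id.sub continuous_const))
            (isOpen_lt ((continuous_id.sub continuous_const).abs) continuous_const)
        filter_upwards [hopen.mem_nhds ⟨hpos, hlt⟩] with y hy
        obtain ⟨hy1, hy2⟩ := hy
        have habs : |(y - ξ)/c| ≤ 1 := by
          rw [abs_div, abs_of_pos hc]; exact le_of_lt ((div_lt_one hc).mpr hy2)
        have hay : |y - ξ| = y - ξ := abs_of_pos hy1
        simp only [Gtrans, phi_eq habs, hay]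
        ring
      refine hev.hasDerivAt_iff.mp ?_
      convert h8 using 1
      have hax : |x - ξ| = x - ξ := abs_of_pos hpos
      simp only [Gd]
      rw [if_pos hlt, hax]
      push_cast
      field_simp
      ring
  · -- |x - ξ| = c : boundary
    have hGd : Gd ξ α c x = 1 := by simp [Gd, hbd]
    rw [hGd, hasDerivAt_iff_isLittleO]
    have hphix : phi ((x - ξ)/c) = 0 := by
      have habs : |(x - ξ)/c| ≤ 1 := by
        rw [abs_div, abs_of_pos hc, hbd, div_self hc.ne']
      rw [phi_eq habs]
      have hsq : ((x - ξ)/c)^2 = 1 := by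
        rw [div_pow, ← sq_abs, hbd]
        field_simp
      rw [hsq]; ring
    have hG0 : Gtrans ξ α c x = x := by simp [Gtrans, hphix]
    have hbig : (fun y => Gtrans ξ α c y - Gtrans ξ α c x - (y - x) • (1:ℝ))
        =O[nhds x] fun y => (y - x)^3 := by
      apply Asymptotics.IsBigO.of_bound (|α| * (8/c))
      filter_upwards with y
      have hexpr : Gtrans ξ α c y - Gtrans ξ α c x - (y - x) • (1:ℝ)
          = α * (phi ((y - ξ)/c) * (y - ξ) * |y - ξ|) := by
        rw [hG0]; simp only [Gtrans, smul_eq_mul, mul_one]; ring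
      rw [hexpr]
      have hk := key_bound hc (t := y - ξ) (t0 := x - ξ) hbd
      have hyx : (y - ξ) - (x - ξ) = y - x := by ring
      rw [hyx] at hk
      simp only [Real.norm_eq_abs, abs_mul α]
      calc |α| * abs (phi ((y - ξ)/c) * (y - ξ) * |y - ξ|)
          ≤ |α| * ((8/c) * |y - x|^3) :=
            mul_le_mul_of_nonneg_left hk (abs_nonneg α)
        _ = |α| * (8/c) * |(y - x)^3| := by rw [abs_pow]; ring
    exact hbig.trans_isLittleO (cube_isLittleO x)
  · -- |x - ξ| > c
    have hGd : Gd ξ α c x = 1 := by simp [Gd, not_lt.2 (le_of_lt hgt)]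
    rw [hGd]
    have hev : (fun y : ℝ => y) =ᶠ[nhds x] Gtrans ξ α c := by
      have hopen : IsOpen {y : ℝ | c < |y - ξ|} :=
        isOpen_lt continuous_const ((continuous_id.sub continuous_const).abs)
      filter_upwards [hopen.mem_nhds hgt] with y hy
      have habs : ¬ |(y - ξ)/c| ≤ 1 := by
        rw [abs_div, abs_of_pos hc, not_le]
        exact (one_lt_div hc).mpr hy
      simp [Gtrans, phi, if_neg habs]
    exact hev.hasDerivAt_iff.mp (hasDerivAt_id x)

lemma Gd_pos (ξ α c : ℝ) (hα : α ≠ 0) (hc : 0 < c) (hc' : c < 1/(6*|α|)) (x : ℝ) :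
    0 < Gd ξ α c x := by
  have hα0 : 0 < |α| := abs_pos.mpr hα
  have h6 : 6 * |α| * c < 1 := by
    rw [lt_div_iff₀ (by positivity)] at hc'
    linarith
  unfold Gd
  split_ifs with h
  · set s : ℝ := ((x - ξ)/c)^2 with hs
    have hs0 : 0 ≤ s := sq_nonneg _
    have hs1 : s ≤ 1 := by
      rw [hs, div_pow, div_le_one (by positivity)]
      nlinarith [abs_le.1 (le_of_lt h), abs_nonneg (x - ξ), sq_abs (x - ξ)]
    have hP : |(1 - s)^2 * (1 - 4*s)| ≤ 1 := by
      rw [abs_le]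
      constructor <;> nlinarith [sq_nonneg (1 - s), sq_nonneg s, mul_nonneg hs0 hs0]
    have ht : 0 ≤ |x - ξ| := abs_nonneg _
    have hPt : 0 ≤ |(1 - s)^2 * (1 - 4*s)| := abs_nonneg _
    have habs : |α * (2 * |x - ξ| * (1 - s)^2 * (1 - 4*s))| < 1 := by
      have hre : α * (2 * |x - ξ| * (1 - s)^2 * (1 - 4*s))
          = α * ((2 * |x - ξ|) * ((1 - s)^2 * (1 - 4*s))) := by ring
      rw [hre, abs_mul, abs_mul, abs_of_nonneg (by positivity : (0:ℝ) ≤ 2 * |x - ξ|)]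
      have s1 : (2 * |x - ξ|) * |(1 - s)^2 * (1 - 4*s)| ≤ 2 * |x - ξ| := by
        nlinarith
      have s2 : (2:ℝ) * |x - ξ| ≤ 2 * c := by linarith
      have s3 : |α| * ((2 * |x - ξ|) * |(1 - s)^2 * (1 - 4*s)|) ≤ |α| * (2 * c) :=
        mul_le_mul_of_nonneg_left (s1.trans s2) hα0.le
      nlinarith
    nlinarith [neg_abs_le (α * (2 * |x - ξ| * (1 - s)^2 * (1 - 4*s)))]
  · norm_num

theorem stmt1 (ξ α c : ℝ) (hα : α ≠ 0) (hc : 0 < c) (hc' : c < 1/(6*|α|)) :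
    (∀ x : ℝ, 0 < deriv (Gtrans ξ α c) x) ∧
    (∀ x : ℝ, c < |x - ξ| → deriv (Gtrans ξ α c) x = 1) ∧
    Function.Bijective (Gtrans ξ α c) := by
  have hD := Gtrans_hasDerivAt ξ α c hc
  have hpos := Gd_pos ξ α c hα hc hc'
  refine ⟨fun x => ?_, fun x hx => ?_, ?_, ?_⟩
  · rw [(hD x).deriv]; exact hpos x
  · rw [(hD x).deriv]
    simp [Gd, not_lt.2 (le_of_lt hx)]
  · exact (strictMono_of_hasDerivAt_pos hD hpos).injective
  · intro z
    have hcont : Continuous (Gtrans ξ α c) :=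
      Differentiable.continuous fun x => (hD x).differentiableAt
    have hid : ∀ y : ℝ, c < |y - ξ| → Gtrans ξ α c y = y := by
      intro y hy
      have habs : ¬ |(y - ξ)/c| ≤ 1 := by
        rw [abs_div, abs_of_pos hc, not_le]
        exact (one_lt_div hc).mpr hy
      simp [Gtrans, phi, if_neg habs]
    set a := min z (ξ - c - 1) with ha
    set b := max z (ξ + c + 1) with hb
    have hab : a ≤ b := le_trans (min_le_left _ _) (le_max_left _ _)
    have hGa : Gtrans ξ α c a = a := by
      apply hid
      have h1 : a ≤ ξ - c - 1 := min_le_right _ _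
      calc c < c + 1 := by linarith
        _ ≤ ξ - a := by linarith
        _ ≤ |ξ - a| := le_abs_self _
        _ = |a - ξ| := abs_sub_comm _ _
    have hGb : Gtrans ξ α c b = b := by
      apply hid
      have h1 : ξ + c + 1 ≤ b := le_max_right _ _
      calc c < c + 1 := by linarith
        _ ≤ b - ξ := by linarith
        _ ≤ |b - ξ| := le_abs_self _
    have hz : z ∈ Set.Icc (Gtrans ξ α c a) (Gtrans ξ α c b) := by
      rw [hGa, hGb]
      exact ⟨min_le_left _ _, le_max_left _ _⟩
    obtain ⟨w, _, hw⟩ := intermediate_value_Icc hab hcont.continuousOn hz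
    exact ⟨w, hw⟩
end

section
/- Let f: ℝ^d → ℝ^m be continuous and intrinsic Lipschitz with constant L on ℝ^d \ Θ, where Θ is a set such that for all x, y ∈ ℝ^d the line segment from x to y meets Θ in finitely many points. Then f is Lipschitz on ℝ^d with constant L with respect to the Euclidean metric. -/
open Set

lemma evar_seg {E : Type*} [NormedAddCommGroup E] [NormedSpace ℝ E] (a b : E) :
    eVariationOn (fun u : ℝ => a + u • (b - a)) (Icc 0 1) ≤ edist a b := by
  have hL : LipschitzWith ‖b - a‖₊ (fun c : ℝ => a + c • (b - a)) := by
    apply LipschitzWith.of_dist_le_mul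
    intro c c'
    simp only [dist_eq_norm]
    rw [show a + c • (b-a) - (a + c' • (b-a)) = (c - c') • (b - a) by module,
      norm_smul, Real.norm_eq_abs, coe_nnnorm, mul_comm]
  have h1 : eVariationOn ((fun c : ℝ => a + c • (b - a)) ∘ id) (Icc (0:ℝ) 1)
      ≤ ‖b - a‖₊ * eVariationOn (id : ℝ → ℝ) (Icc 0 1) :=
    LipschitzOnWith.comp_eVariationOn_le (hL.lipschitzOnWith (s := univ)) (mapsTo_univ _ _)
  have h2 : eVariationOn (id : ℝ → ℝ) (Icc 0 1) ≤ ENNReal.ofReal 1 := by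
    have := (monotoneOn_id (s := Icc (0:ℝ) 1)).eVariationOn_le
      (a := 0) (b := 1) (by simp) (by simp)
    simpa using this
  calc eVariationOn (fun u : ℝ => a + u • (b - a)) (Icc 0 1)
      ≤ ‖b - a‖₊ * ENNReal.ofReal 1 := le_trans h1 (mul_le_mul_right h2 _)
    _ = edist a b := by
        rw [ENNReal.ofReal_one, mul_one, edist_nndist, nndist_eq_nnnorm,
          show ‖b - a‖₊ = ‖a - b‖₊ from by rw [← neg_sub, nnnorm_neg]]

noncomputable def intrinsicDist {E : Type*} [NormedAddCommGroup E]
    (A : Set E) (x y : E) : ENNReal :=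
  ⨅ (γ : ℝ → E) (_ : ContinuousOn γ (Icc 0 1)) (_ : MapsTo γ (Icc 0 1) A)
    (_ : γ 0 = x) (_ : γ 1 = y), eVariationOn γ (Icc 0 1)

lemma intrinsicDist_le_of_seg {E : Type*} [NormedAddCommGroup E] [NormedSpace ℝ E]
    (A : Set E) (a b : E) (hseg : segment ℝ a b ⊆ A) :
    intrinsicDist A a b ≤ edist a b := by
  have hδ : ContinuousOn (fun u : ℝ => a + u • (b - a)) (Icc 0 1) :=
    (continuous_const.add (continuous_id.smul continuous_const)).continuousOn
  have hmaps : MapsTo (fun u : ℝ => a + u • (b - a)) (Icc 0 1) A := by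
    intro u hu
    apply hseg
    rw [segment_eq_image']
    exact ⟨u, hu, rfl⟩
  refine le_trans ?_ (evar_seg a b)
  exact iInf_le_of_le _ (iInf_le_of_le hδ (iInf_le_of_le hmaps
    (iInf_le_of_le (by simp) (iInf_le_of_le (by simp) le_rfl))))

theorem stmt8 (d m : ℕ) (Θ : Set (EuclideanSpace ℝ (Fin d)))
    (f : EuclideanSpace ℝ (Fin d) → EuclideanSpace ℝ (Fin m)) (L : NNReal)
    (hcont : Continuous f)
    (hlip : ∀ x ∈ Θᶜ, ∀ y ∈ Θᶜ, edist (f x) (f y) ≤ L * intrinsicDist Θᶜ x y)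
    (hseg : ∀ x y : EuclideanSpace ℝ (Fin d), (segment ℝ x y ∩ Θ).Finite) :
    LipschitzWith L f := by
  rw [lipschitzWith_iff_dist_le_mul]
  intro x y
  rcases eq_or_ne x y with rfl | hxy
  · simp
  -- setup
  set v := y - x with hv
  have hvne : v ≠ 0 := sub_ne_zero.mpr (Ne.symm hxy)
  set γ : ℝ → EuclideanSpace ℝ (Fin d) := fun t => x + t • v with hγ
  have hγcont : Continuous γ := continuous_const.add (continuous_id.smul continuous_const)
  set g : ℝ → EuclideanSpace ℝ (Fin m) := fun t => f (γ t) with hg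
  have hgcont : Continuous g := hcont.comp hγcont
  set C : ℝ := L * dist x y with hC
  have hC0 : 0 ≤ C := mul_nonneg L.coe_nonneg dist_nonneg
  have hγdist : ∀ t s : ℝ, dist (γ t) (γ s) = |t - s| * dist x y := by
    intro t s
    rw [dist_eq_norm, show γ t - γ s = (t - s) • v by simp only [hγ]; module,
      norm_smul, Real.norm_eq_abs, dist_eq_norm,
      show x - y = -v by rw [hv]; abel, norm_neg]
  -- the bad parameter set
  have hγinj : Function.Injective γ := by
    intro t s h
    simp only [hγ] at h
    have h' : t • v = s • v := add_right_injective x h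
    have : (t - s) • v = 0 := by rw [sub_smul, h', sub_self]
    rcases smul_eq_zero.mp this with h' | h'
    · linarith [sub_eq_zero.mp (by exact_mod_cast h')]
    · exact absurd h' hvne
  have hBadFin : (γ ⁻¹' Θ ∩ Icc 0 1).Finite := by
    have : γ ⁻¹' Θ ∩ Icc 0 1 ⊆ γ ⁻¹' (segment ℝ x y ∩ Θ) := by
      intro t ⟨ht1, ht2⟩
      refine ⟨?_, ht1⟩
      rw [segment_eq_image']
      exact ⟨t, ht2, rfl⟩
    exact Finite.subset (Finite.preimage hγinj.injOn (hseg x y)) this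
  -- key closed-interval estimate
  have hkey : ∀ t s : ℝ, t ≤ s → (∀ u ∈ Icc t s, γ u ∉ Θ) →
      dist (g t) (g s) ≤ C * (s - t) := by
    intro t s hts hgood
    have hseg' : segment ℝ (γ t) (γ s) ⊆ Θᶜ := by
      intro z hz
      rw [segment_eq_image'] at hz
      obtain ⟨u, hu, rfl⟩ := hz
      have heq : γ t + u • (γ s - γ t) = γ (t + u * (s - t)) := by
        simp only [hγ]; module
      show γ t + u • (γ s - γ t) ∈ Θᶜ
      rw [heq]
      exact hgood _ ⟨by nlinarith [hu.1, hu.2], by nlinarith [hu.1, hu.2]⟩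
    have h1 : edist (f (γ t)) (f (γ s)) ≤ L * intrinsicDist Θᶜ (γ t) (γ s) :=
      hlip _ (hseg' (left_mem_segment ℝ _ _)) _ (hseg' (right_mem_segment ℝ _ _))
    have h2 := intrinsicDist_le_of_seg Θᶜ (γ t) (γ s) hseg'
    have h3 : edist (f (γ t)) (f (γ s)) ≤ L * edist (γ t) (γ s) :=
      h1.trans (mul_le_mul_right h2 _)
    rw [edist_dist, edist_dist, ← ENNReal.ofReal_coe_nnreal, ← ENNReal.ofReal_mul
      L.coe_nonneg] at h3
    have h4 : dist (g t) (g s) ≤ (L : ℝ) * dist (γ t) (γ s) :=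
      (ENNReal.ofReal_le_ofReal_iff (mul_nonneg L.coe_nonneg dist_nonneg)).mp h3
    calc dist (g t) (g s) ≤ (L : ℝ) * dist (γ t) (γ s) := h4
      _ = C * (s - t) := by
          rw [hγdist, abs_of_nonpos (by linarith), hC]; ring
  -- open interval estimate, endpoints may be bad
  have hopen : ∀ t s : ℝ, t < s → (∀ u ∈ Ioo t s, γ u ∉ Θ) →
      dist (g t) (g s) ≤ C * (s - t) := by
    intro t s hts hgood
    apply le_of_forall_pos_le_add
    intro ε hε
    obtain ⟨δ₁, hδ₁, h₁⟩ := Metric.continuousAt_iff.mp (hgcont.continuousAt (x := t)) (ε/2)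
      (by linarith)
    obtain ⟨δ₂, hδ₂, h₂⟩ := Metric.continuousAt_iff.mp (hgcont.continuousAt (x := s)) (ε/2)
      (by linarith)
    set mid := (t + s) / 2 with hmid
    set t' := min (t + δ₁/2) mid with ht'
    set s' := max (s - δ₂/2) mid with hs'
    have htt' : t < t' := lt_min (by linarith) (by simp only [hmid]; linarith)
    have hs's : s' < s := max_lt (by linarith) (by simp only [hmid]; linarith)
    have ht's' : t' ≤ s' := le_trans (min_le_right _ _) (le_max_right _ _)
    have hd1 : dist (g t') (g t) < ε/2 := by
      apply h₁
      rw [Real.dist_eq, abs_of_pos (by linarith)]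
      calc t' - t ≤ (t + δ₁/2) - t := by simp only [ht']; linarith [min_le_left (t + δ₁/2) mid]
        _ < δ₁ := by linarith
    have hd2 : dist (g s') (g s) < ε/2 := by
      apply h₂
      rw [Real.dist_eq, abs_of_neg (by linarith)]
      calc -(s' - s) ≤ -((s - δ₂/2) - s) := by
            simp only [hs']; linarith [le_max_left (s - δ₂/2) mid]
        _ < δ₂ := by linarith
    have hmidkey : dist (g t') (g s') ≤ C * (s' - t') := by
      apply hkey _ _ ht's'
      intro u hu
      exact hgood u ⟨lt_of_lt_of_le htt' hu.1, lt_of_le_of_lt hu.2 hs's⟩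
    calc dist (g t) (g s) ≤ dist (g t) (g t') + dist (g t') (g s') + dist (g s') (g s) :=
          dist_triangle4 _ _ _ _
      _ ≤ ε/2 + C * (s' - t') + ε/2 := by
          rw [dist_comm (g t) (g t')]; linarith
      _ ≤ C * (s - t) + ε := by
          have : C * (s' - t') ≤ C * (s - t) := by
            apply mul_le_mul_of_nonneg_left _ hC0
            linarith
          linarith
  -- main induction on number of bad points in the open interval
  have hmain : ∀ n : ℕ, ∀ t s : ℝ, 0 ≤ t → t ≤ s → s ≤ 1 →
      (γ ⁻¹' Θ ∩ Ioo t s).ncard ≤ n → dist (g t) (g s) ≤ C * (s - t) := by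
    intro n
    induction n with
    | zero =>
      intro t s ht hts hs hcard
      rcases eq_or_lt_of_le hts with rfl | hlt
      · simp [mul_comm]
      have hfin : (γ ⁻¹' Θ ∩ Ioo t s).Finite :=
        hBadFin.subset (fun u ⟨hu1, hu2⟩ => ⟨hu1, ⟨by linarith [hu2.1], by linarith [hu2.2]⟩⟩)
      have hempty : γ ⁻¹' Θ ∩ Ioo t s = ∅ := by
        rw [← Set.ncard_eq_zero hfin]; omega
      apply hopen _ _ hlt
      intro u hu hmem
      have : u ∈ γ ⁻¹' Θ ∩ Ioo t s := Set.mem_inter hmem hu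
      rw [hempty] at this
      exact absurd this (notMem_empty u)
    | succ n ih =>
      intro t s ht hts hs hcard
      rcases eq_or_lt_of_le hts with rfl | hlt
      · simp [mul_comm]
      have hfin : (γ ⁻¹' Θ ∩ Ioo t s).Finite :=
        hBadFin.subset (fun u ⟨hu1, hu2⟩ => ⟨hu1, ⟨by linarith [hu2.1], by linarith [hu2.2]⟩⟩)
      rcases eq_empty_or_nonempty (γ ⁻¹' Θ ∩ Ioo t s) with hempty | hne
      · apply hopen _ _ hlt
        intro u hu hmem
        have : u ∈ γ ⁻¹' Θ ∩ Ioo t s := Set.mem_inter hmem hu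
        rw [hempty] at this
        exact absurd this (notMem_empty u)
      · obtain ⟨u, humem⟩ := hne
        have hu1 : γ u ∈ Θ := humem.1
        have hu2 : u ∈ Ioo t s := humem.2
        have hsub1 : γ ⁻¹' Θ ∩ Ioo t u ⊆ (γ ⁻¹' Θ ∩ Ioo t s) \ {u} := by
          intro w ⟨hw1, hw2⟩
          exact ⟨⟨hw1, hw2.1, by linarith [hw2.2, hu2.2]⟩, fun h => by
            rw [mem_singleton_iff] at h; linarith [hw2.2, h.le, h.ge]⟩
        have hsub2 : γ ⁻¹' Θ ∩ Ioo u s ⊆ (γ ⁻¹' Θ ∩ Ioo t s) \ {u} := by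
          intro w ⟨hw1, hw2⟩
          exact ⟨⟨hw1, by linarith [hw2.1, hu2.1], hw2.2⟩, fun h => by
            rw [mem_singleton_iff] at h; linarith [hw2.1, h.le, h.ge]⟩
        have hdcard : ((γ ⁻¹' Θ ∩ Ioo t s) \ {u}).ncard ≤ n := by
          rw [Set.ncard_diff_singleton_of_mem humem]
          omega
        have hc1 : (γ ⁻¹' Θ ∩ Ioo t u).ncard ≤ n :=
          le_trans (Set.ncard_le_ncard hsub1 hfin.diff) hdcard
        have hc2 : (γ ⁻¹' Θ ∩ Ioo u s).ncard ≤ n :=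
          le_trans (Set.ncard_le_ncard hsub2 hfin.diff) hdcard
        have hb1 := ih t u ht (le_of_lt hu2.1) (by linarith [hu2.2]) hc1
        have hb2 := ih u s (by linarith [hu2.1]) (le_of_lt hu2.2) hs hc2
        calc dist (g t) (g s) ≤ dist (g t) (g u) + dist (g u) (g s) := dist_triangle _ _ _
          _ ≤ C * (u - t) + C * (s - u) := by linarith
          _ = C * (s - t) := by ring
  have := hmain (γ ⁻¹' Θ ∩ Ioo 0 1).ncard 0 1 le_rfl zero_le_one le_rfl le_rfl
  have e0 : g 0 = f x := by rw [hg]; simp [hγ]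
  have e1 : g 1 = f y := by rw [hg]; simp [hγ, hv]
  rw [e0, e1] at this
  have hfin : dist (f x) (f y) ≤ C := by linarith
  rw [hC] at hfin
  exact hfin
end

section
/- The function f: ℝ² → ℝ given in polar coordinates by f(x) = ‖x‖·arg(x) (with arg taking values in (-π, π]) is not Lipschitz continuous on ℝ², but is intrinsic Lipschitz on ℝ² with the negative real half-axis {x ∈ ℝ²: x₁ < 0, x₂ = 0} removed. -/
open Set

section Aux
open Real Complex


set_option maxHeartbeats 2000000 in
/-- Euclidean Lipschitz estimate when the angles differ by at most π. -/
lemma keyA (x y : ℂ) (h : |x.arg - y.arg| ≤ π) :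
    dist (‖x‖ * x.arg) (‖y‖ * y.arg) ≤ 3 * π * dist x y := by
  have hpi : (0:ℝ) < π := Real.pi_pos
  rcases eq_or_ne x 0 with rfl | hx0
  · simp only [norm_zero, Complex.arg_zero, zero_mul, Real.dist_eq, zero_sub, abs_neg, abs_mul]
    rw [dist_comm, Complex.dist_eq, sub_zero]
    have h1 : |(‖y‖ : ℝ)| = ‖y‖ := abs_of_nonneg (norm_nonneg y)
    have h2 : |y.arg| ≤ π := Complex.abs_arg_le_pi y
    nlinarith [norm_nonneg y, abs_nonneg y.arg]
  rcases eq_or_ne y 0 with rfl | hy0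
  · simp only [norm_zero, Complex.arg_zero, zero_mul, Real.dist_eq, sub_zero, abs_mul]
    rw [Complex.dist_eq, sub_zero]
    have h1 : |(‖x‖ : ℝ)| = ‖x‖ := abs_of_nonneg (norm_nonneg x)
    have h2 : |x.arg| ≤ π := Complex.abs_arg_le_pi x
    nlinarith [norm_nonneg x, abs_nonneg x.arg]
  set a := ‖x‖ with ha
  set b := ‖y‖ with hb
  set s := x.arg with hs
  set t := y.arg with ht
  set d := dist x y with hd
  have ha0 : 0 < a := norm_pos_iff.mpr hx0
  have hb0 : 0 < b := norm_pos_iff.mpr hy0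
  have hd0 : 0 ≤ d := dist_nonneg
  have hxre : x.re = a * Real.cos s := by
    rw [Complex.cos_arg hx0]; field_simp; rfl
  have hxim : x.im = a * Real.sin s := by
    rw [Complex.sin_arg]; field_simp; rfl
  have hyre : y.re = b * Real.cos t := by
    rw [Complex.cos_arg hy0]; field_simp; rfl
  have hyim : y.im = b * Real.sin t := by
    rw [Complex.sin_arg]; field_simp; rfl
  have hsq : d ^ 2 = a ^ 2 + b ^ 2 - 2 * a * b * Real.cos (s - t) := by
    have : d ^ 2 = Complex.normSq (x - y) := by
      rw [hd, Complex.dist_eq, Complex.sq_norm]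
    rw [this, Complex.normSq_apply, Complex.sub_re, Complex.sub_im, hxre, hxim, hyre, hyim,
      Real.cos_sub]
    have hx1 : Real.sin s ^ 2 + Real.cos s ^ 2 = 1 := Real.sin_sq_add_cos_sq s
    have hy1 : Real.sin t ^ 2 + Real.cos t ^ 2 = 1 := Real.sin_sq_add_cos_sq t
    nlinarith [hx1, hy1]
  have hcos : Real.cos (s - t) ≤ 1 - 2 / π ^ 2 * (s - t) ^ 2 :=
    Real.cos_le_one_sub_mul_cos_sq h
  set m := min a b with hm
  have hm0 : 0 < m := lt_min ha0 hb0
  have hmab : m ^ 2 ≤ a * b := by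
    rcases min_le_iff.mp (le_refl m) with _ | _ <;>
    nlinarith [min_le_left a b, min_le_right a b]
  -- chord bound : 2 m |s - t| ≤ π d
  have hchord : 2 * m * |s - t| ≤ π * d := by
    have e0 : 2 * a * b * Real.cos (s - t) ≤ 2 * a * b * (1 - 2 / π ^ 2 * (s - t) ^ 2) :=
      mul_le_mul_of_nonneg_left hcos (by positivity)
    have e1 : (a - b) ^ 2 + 2 * a * b * (2 / π ^ 2 * (s - t) ^ 2) ≤ d ^ 2 := by
      nlinarith [hsq, e0]
    have e2 : 4 * m ^ 2 * (s - t) ^ 2 ≤ π ^ 2 * d ^ 2 := by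
      have e1' := mul_le_mul_of_nonneg_left e1 (by positivity : (0:ℝ) ≤ π ^ 2)
      have h3 : π ^ 2 * ((a - b) ^ 2 + 2 * a * b * (2 / π ^ 2 * (s - t) ^ 2))
          = π ^ 2 * (a - b) ^ 2 + 4 * (a * b) * (s - t) ^ 2 := by
        field_simp; ring
      have h4 := mul_le_mul_of_nonneg_right hmab (sq_nonneg (s - t))
      nlinarith [e1', h3, h4, sq_nonneg (a - b), mul_nonneg (sq_nonneg π) (sq_nonneg (a - b))]
    have h2 : (2 * m * |s - t|) ^ 2 ≤ (π * d) ^ 2 := by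
      have habs : |s - t| ^ 2 = (s - t) ^ 2 := sq_abs _
      nlinarith [e2, habs]
    have hl : 0 ≤ 2 * m * |s - t| := by positivity
    have hr : 0 ≤ π * d := by positivity
    calc 2 * m * |s - t| = Real.sqrt ((2 * m * |s - t|) ^ 2) := (Real.sqrt_sq hl).symm
      _ ≤ Real.sqrt ((π * d) ^ 2) := Real.sqrt_le_sqrt h2
      _ = π * d := Real.sqrt_sq hr
  have habd : |a - b| ≤ d := by
    have := abs_norm_sub_norm_le x y
    simpa [← Complex.dist_eq] using this
  have hbm : b ≤ m + |a - b| := by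
    rcases le_total a b with hab | hab
    · have h1 : m = a := min_eq_left hab
      have h2 : |a - b| = b - a := by rw [abs_of_nonpos (by linarith)]; ring
      rw [h1, h2]; ring_nf; rfl
    · have : m = b := min_eq_right hab
      rw [this]; nlinarith [abs_nonneg (a - b)]
  have hst : |s| ≤ π := Complex.abs_arg_le_pi x
  have htt : |t| ≤ π := Complex.abs_arg_le_pi y
  rw [Real.dist_eq]
  have hsplit : |a * s - b * t| ≤ |a - b| * |s| + b * |s - t| := by
    have : a * s - b * t = (a - b) * s + b * (s - t) := by ring
    rw [this]
    calc |(a - b) * s + b * (s - t)| ≤ |(a - b) * s| + |b * (s - t)| := abs_add_le _ _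
      _ = |a - b| * |s| + b * |s - t| := by
          rw [abs_mul, abs_mul, _root_.abs_of_nonneg hb0.le]
  have hbst : b * |s - t| ≤ m * |s - t| + |a - b| * |s - t| := by
    nlinarith [abs_nonneg (s - t), hbm]
  nlinarith [hsplit, hbst, hchord, habd, hst, abs_nonneg (s - t), abs_nonneg (a - b),
    mul_le_mul_of_nonneg_left hst (abs_nonneg (a - b)), h, abs_nonneg s]


lemma part1 : ¬ ∃ K : NNReal, LipschitzWith K (fun z : ℂ => ‖z‖ * Complex.arg z) := by
  rintro ⟨K, hK⟩
  have hpi : (0:ℝ) < π := Real.pi_pos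
  set ε : ℝ := π / (4 * ((K:ℝ) + 1)) with hε
  have hK0 : (0:ℝ) ≤ K := K.2
  have hε0 : 0 < ε := by positivity
  set z₁ : ℂ := ⟨-1, ε⟩ with hz₁
  set z₂ : ℂ := ⟨-1, -ε⟩ with hz₂
  have hre1 : z₁.re = -1 := rfl
  have him1 : z₁.im = ε := rfl
  have hre2 : z₂.re = -1 := rfl
  have him2 : z₂.im = -ε := rfl
  have harg1 := Complex.arg_of_re_neg_of_im_nonneg
    (show z₁.re < 0 by rw [hre1]; norm_num) (show 0 ≤ z₁.im by rw [him1]; exact hε0.le)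
  have harg2 := Complex.arg_of_re_neg_of_im_neg
    (show z₂.re < 0 by rw [hre2]; norm_num) (show z₂.im < 0 by rw [him2]; linarith)
  have ha1 : π / 2 ≤ z₁.arg := by
    rw [harg1]
    have := Real.neg_pi_div_two_le_arcsin ((-z₁).im / ‖z₁‖)
    linarith
  have ha2 : z₂.arg ≤ -(π / 2) := by
    rw [harg2]
    have := Real.arcsin_le_pi_div_two ((-z₂).im / ‖z₂‖)
    linarith
  have habs1 : 1 ≤ ‖z₁‖ := by
    have := Complex.abs_re_le_norm z₁
    rw [hre1] at this; rw [abs_neg, abs_one] at this; exact this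
  have habs2 : 1 ≤ ‖z₂‖ := by
    have := Complex.abs_re_le_norm z₂
    rw [hre2] at this; rw [abs_neg, abs_one] at this; exact this
  have hf1 : π / 2 ≤ ‖z₁‖ * z₁.arg := by
    nlinarith [norm_nonneg z₁]
  have hf2 : ‖z₂‖ * z₂.arg ≤ -(π / 2) := by
    nlinarith [norm_nonneg z₂]
  have hdist : dist z₁ z₂ = 2 * ε := by
    rw [Complex.dist_eq, Complex.norm_def, Complex.normSq_apply]
    have h1 : (z₁ - z₂).re = 0 := by simp [Complex.sub_re, hre1, hre2]
    have h2 : (z₁ - z₂).im = 2 * ε := by simp [Complex.sub_im, him1, him2]; ring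
    rw [h1, h2]
    rw [show (0:ℝ) * 0 + 2 * ε * (2 * ε) = (2 * ε) ^ 2 by ring]
    exact Real.sqrt_sq (by positivity)
  have hlip := hK.dist_le_mul z₁ z₂
  simp only [Real.dist_eq] at hlip
  rw [hdist] at hlip
  have : π ≤ |‖z₁‖ * z₁.arg - ‖z₂‖ * z₂.arg| := by
    rw [_root_.abs_of_nonneg (by linarith)]
    linarith
  have hfin : π ≤ (K:ℝ) * (2 * ε) := le_trans this hlip
  rw [hε] at hfin
  have h2 : (K:ℝ) * (2 * (π / (4 * ((K:ℝ) + 1)))) < π := by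
    have hd : (0:ℝ) < 4 * ((K:ℝ) + 1) := by positivity
    have he : (K:ℝ) * (2 * (π / (4 * ((K:ℝ) + 1)))) = (K:ℝ) * 2 * π / (4 * ((K:ℝ) + 1)) := by
      ring
    rw [he, div_lt_iff₀ hd]
    nlinarith
  linarith

lemma keyE (x y : ℂ) (h : |x.arg - y.arg| ≤ π) :
    edist ((‖x‖ : ℝ) * x.arg) ((‖y‖ : ℝ) * y.arg)
      ≤ ENNReal.ofReal (3 * π) * edist x y := by
  rw [edist_dist, edist_dist, ← ENNReal.ofReal_mul (by positivity)]
  exact ENNReal.ofReal_le_ofReal (keyA x y h)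

lemma im_pos_of_arg_pos {z : ℂ} (hz : ¬(z.re < 0 ∧ z.im = 0)) (h : 0 < z.arg) : 0 < z.im := by
  rcases lt_trichotomy z.im 0 with h1 | h1 | h1
  · exact absurd (Complex.arg_neg_iff.2 h1) (by linarith)
  · have hre : 0 ≤ z.re := by
      by_contra hre
      exact hz ⟨lt_of_not_ge hre, h1⟩
    exact absurd (Complex.arg_eq_zero_iff.2 ⟨hre, h1⟩) (by linarith)
  · exact h1

lemma part2 : ∃ K : NNReal, ∀ x ∈ {z : ℂ | ¬(z.re < 0 ∧ z.im = 0)},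
    ∀ y ∈ {z : ℂ | ¬(z.re < 0 ∧ z.im = 0)},
      edist (‖x‖ * Complex.arg x) (‖y‖ * Complex.arg y)
        ≤ K * intrinsicDist {z : ℂ | ¬(z.re < 0 ∧ z.im = 0)} x y := by
  have hpi : (0:ℝ) < π := Real.pi_pos
  refine ⟨Real.toNNReal (3 * π), ?_⟩
  intro x hx y hy
  set A : Set ℂ := {z : ℂ | ¬(z.re < 0 ∧ z.im = 0)} with hA
  set c : ENNReal := ENNReal.ofReal (3 * π) with hc
  have hx' : ¬(x.re < 0 ∧ x.im = 0) := hx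
  have hy' : ¬(y.re < 0 ∧ y.im = 0) := hy
  -- the central estimate along any admissible curve
  have main : ∀ γ : ℝ → ℂ, ContinuousOn γ (Icc 0 1) → MapsTo γ (Icc 0 1) A →
      γ 0 = x → γ 1 = y →
      edist ((‖x‖ : ℝ) * x.arg) ((‖y‖ : ℝ) * y.arg)
        ≤ c * eVariationOn γ (Icc 0 1) := by
    intro γ hcont hmap h0 h1
    by_cases hΔ : |x.arg - y.arg| ≤ π
    · calc edist ((‖x‖ : ℝ) * x.arg) ((‖y‖ : ℝ) * y.arg)
          ≤ c * edist x y := keyE x y hΔ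
        _ ≤ c * eVariationOn γ (Icc 0 1) := by
            gcongr
            rw [← h0, ← h1]
            exact eVariationOn.edist_le γ (left_mem_Icc.2 zero_le_one)
              (right_mem_Icc.2 zero_le_one)
    · push_neg at hΔ
      have hax := Complex.abs_arg_le_pi x
      have hay := Complex.abs_arg_le_pi y
      have haxl := Complex.neg_pi_lt_arg x
      have hayl := Complex.neg_pi_lt_arg y
      rw [abs_le] at hax hay
      -- the two endpoints lie on opposite sides of the real axis
      have hsigns : (0 < x.arg ∧ y.arg < 0) ∨ (x.arg < 0 ∧ 0 < y.arg) := by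
        rcases abs_cases (x.arg - y.arg) with ⟨he, _⟩ | ⟨he, _⟩
        · left; constructor <;> nlinarith [hΔ, he]
        · right; constructor <;> nlinarith [hΔ, he]
      -- find a crossing point on the nonnegative real axis
      have hcross : ∃ t ∈ Icc (0:ℝ) 1, (γ t).im = 0 := by
        have hgc : ContinuousOn (fun u => (γ u).im) (Icc 0 1) :=
          Complex.continuous_im.comp_continuousOn hcont
        rcases hsigns with ⟨hx1, hy1⟩ | ⟨hx1, hy1⟩
        · have hximp : 0 < x.im := im_pos_of_arg_pos hx' hx1
          have hyimn : y.im < 0 := Complex.arg_neg_iff.1 hy1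
          have := intermediate_value_Icc' zero_le_one hgc
            (show (0:ℝ) ∈ Icc ((γ 1).im) ((γ 0).im) by
              rw [h0, h1]; exact ⟨hyimn.le, hximp.le⟩)
          obtain ⟨t, ht, hgt⟩ := this
          exact ⟨t, ht, hgt⟩
        · have hyimp : 0 < y.im := im_pos_of_arg_pos hy' hy1
          have hximn : x.im < 0 := Complex.arg_neg_iff.1 hx1
          have := intermediate_value_Icc zero_le_one hgc
            (show (0:ℝ) ∈ Icc ((γ 0).im) ((γ 1).im) by
              rw [h0, h1]; exact ⟨hximn.le, hyimp.le⟩)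
          obtain ⟨t, ht, hgt⟩ := this
          exact ⟨t, ht, hgt⟩
      obtain ⟨t, ht, him⟩ := hcross
      set p : ℂ := γ t with hp
      have hpA : ¬(p.re < 0 ∧ p.im = 0) := hmap ht
      have hpre : 0 ≤ p.re := by
        by_contra hre
        exact hpA ⟨lt_of_not_ge hre, him⟩
      have hargp : p.arg = 0 := Complex.arg_eq_zero_iff.2 ⟨hpre, him⟩
      have hxp : |x.arg - p.arg| ≤ π := by
        rw [hargp, sub_zero]; exact Complex.abs_arg_le_pi x
      have hpy : |p.arg - y.arg| ≤ π := by
        rw [hargp, zero_sub, abs_neg]; exact Complex.abs_arg_le_pi y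
      have e1 : edist x p ≤ eVariationOn γ (Icc 0 1 ∩ Icc 0 t) := by
        rw [← h0]
        exact eVariationOn.edist_le γ
          ⟨left_mem_Icc.2 zero_le_one, left_mem_Icc.2 ht.1⟩
          ⟨ht, right_mem_Icc.2 ht.1⟩
      have e2 : edist p y ≤ eVariationOn γ (Icc 0 1 ∩ Icc t 1) := by
        rw [← h1]
        exact eVariationOn.edist_le γ
          ⟨ht, left_mem_Icc.2 ht.2⟩
          ⟨right_mem_Icc.2 zero_le_one, right_mem_Icc.2 ht.2⟩
      have esum := eVariationOn.Icc_add_Icc γ (s := Icc (0:ℝ) 1) ht.1 ht.2 ht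
      rw [Set.inter_self] at esum
      calc edist ((‖x‖ : ℝ) * x.arg) ((‖y‖ : ℝ) * y.arg)
          ≤ edist ((‖x‖ : ℝ) * x.arg) ((‖p‖ : ℝ) * p.arg)
            + edist ((‖p‖ : ℝ) * p.arg) ((‖y‖ : ℝ) * y.arg) :=
            edist_triangle _ _ _
        _ ≤ c * edist x p + c * edist p y := add_le_add (keyE x p hxp) (keyE p y hpy)
        _ = c * (edist x p + edist p y) := (mul_add _ _ _).symm
        _ ≤ c * (eVariationOn γ (Icc 0 1 ∩ Icc 0 t) + eVariationOn γ (Icc 0 1 ∩ Icc t 1)) := by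
            gcongr
        _ = c * eVariationOn γ (Icc 0 1) := by rw [esum]
  -- pass to the infimum
  have hc0 : c ≠ 0 := (ENNReal.ofReal_pos.2 (by positivity)).ne'
  have hctop : c ≠ ⊤ := ENNReal.ofReal_ne_top
  show edist ((‖x‖ : ℝ) * x.arg) ((‖y‖ : ℝ) * y.arg)
      ≤ c * intrinsicDist A x y
  rw [intrinsicDist, mul_comm c, ← ENNReal.div_le_iff_le_mul (Or.inl hc0) (Or.inl hctop)]
  refine le_iInf fun γ => le_iInf fun hcont => le_iInf fun hmap => le_iInf fun h0 =>
    le_iInf fun h1 => ?_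
  rw [ENNReal.div_le_iff_le_mul (Or.inl hc0) (Or.inl hctop), mul_comm _ c]
  exact main γ hcont hmap h0 h1

end Aux

/-- `f x = ‖x‖ · arg x` on `ℝ² ≅ ℂ` is not Lipschitz, but is intrinsic
Lipschitz on the plane with the negative real half-axis removed. -/
theorem stmt9 :
    (¬ ∃ K : NNReal, LipschitzWith K (fun z : ℂ => ‖z‖ * Complex.arg z)) ∧
    (∃ K : NNReal, ∀ x ∈ {z : ℂ | ¬(z.re < 0 ∧ z.im = 0)},
      ∀ y ∈ {z : ℂ | ¬(z.re < 0 ∧ z.im = 0)},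
        edist (‖x‖ * Complex.arg x) (‖y‖ * Complex.arg y)
          ≤ K * intrinsicDist {z : ℂ | ¬(z.re < 0 ∧ z.im = 0)} x y) :=
  ⟨part1, part2⟩
end
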